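/- Write M(x) = p_1(x)^{t_1}·p_2(x)^{t_2}·…·p_K(x)^{t_K}, where p_1(x), …, p_K(x) ∈ F[x] are pairwise distinct monic irreducible polynomials and each t_i is a positive integer. For 1 ≤ i ≤ K, let d_i be the number of indices j ∈ {1, …, L} such that p_i(x)^{t_i} divides m_j(x). Then the code distance of the polynomial remainder code with moduli m_1(x), …, m_L(x) equals min{d_1, d_2, …, d_K}. -/

import Mathlib

open Polynomial
open scoped Classical

/-- The code distance of the polynomial remainder code with moduli `m i`, `i ∈ s`:
the minimum over nonzero `a` with `deg a < deg (lcm of moduli)` of the number of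
indices `i ∈ s` with `¬ m i ∣ a`. -/
noncomputable def codeDist {F : Type*} [Field F] {ι : Type*} (s : Finset ι)
    (m : ι → Polynomial F) : ℕ :=
  sInf {k | ∃ a : Polynomial F, a ≠ 0 ∧ a.degree < (s.lcm m).degree ∧
    (s.filter fun i => ¬ m i ∣ a).card = k}

/-- Key divisibility lemma: if `m ∣ p^t * b`, `p` prime not dividing `b`, and
`p^t ∤ m`, then `m ∣ p^(t-1) * b`. -/
lemma key_dvd {F : Type*} [Field F] {p b mm : Polynomial F} (hp : Prime p)
    (hpb : ¬ p ∣ b) {t : ℕ} (hm : mm ≠ 0) (hdvd : mm ∣ p ^ t * b)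
    (hnot : ¬ p ^ t ∣ mm) : mm ∣ p ^ (t - 1) * b := by
  have hfin : FiniteMultiplicity p mm := FiniteMultiplicity.of_prime_left hp hm
  obtain ⟨u, hu, hpu⟩ := hfin.exists_eq_pow_mul_and_not_dvd
  set e := multiplicity p mm with he
  have het : e ≤ t - 1 := by
    by_contra h
    push_neg at h
    exact hnot (hu ▸ dvd_mul_of_dvd_left (pow_dvd_pow p (by omega)) u)
  have h1 : p ^ e * u ∣ p ^ e * (p ^ (t - e) * b) := by
    rw [← mul_assoc, ← pow_add, show e + (t - e) = t by omega]
    exact hu ▸ hdvd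
  have hu_dvd : u ∣ p ^ (t - e) * b :=
    (mul_dvd_mul_iff_left (pow_ne_zero e hp.ne_zero)).mp h1
  have hcop : IsCoprime (p ^ (t - e)) u :=
    (((hp.irreducible.isCoprime_or_dvd u).resolve_right hpu)).pow_left
  have hub : u ∣ b := (hcop.symm.pow_right (n := 1)).dvd_of_dvd_mul_left
    (by simpa using hu_dvd)
  calc mm = p ^ e * u := hu
    _ ∣ p ^ (t - 1) * b := mul_dvd_mul (pow_dvd_pow p het) hub

/-- If `M = p_1^{t_1} ⋯ p_K^{t_K}` with `p_i` pairwise distinct monic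
irreducible and `t_i ≥ 1`, and `d_i` is the number of moduli divisible by `p_i^{t_i}`,
then the code distance equals `min{d_1, …, d_K}`. -/
theorem stmt2 {F : Type*} [Field F] {L : ℕ} (hL : 2 ≤ L)
    (m : Fin L → Polynomial F)
    (hmonic : ∀ i, (m i).Monic)
    (hdist : Function.Injective m)
    (hdeg : ∀ i, 0 < (m i).degree)
    {K : ℕ} (hK : 0 < K)
    (p : Fin K → Polynomial F) (t : Fin K → ℕ)
    (hpmonic : ∀ i, (p i).Monic)
    (hpirr : ∀ i, Irreducible (p i))
    (hpdist : Function.Injective p)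
    (ht : ∀ i, 0 < t i)
    (hM : Finset.univ.lcm m = ∏ i, p i ^ t i) :
    codeDist Finset.univ m =
      sInf (Set.range fun i : Fin K =>
        (Finset.univ.filter fun j : Fin L => p i ^ t i ∣ m j).card) := by
  classical
  have hp_prime : ∀ i, Prime (p i) := fun i => (hpirr i).prime
  set M := Finset.univ.lcm m with hMdef
  have hM0 : M ≠ 0 := by
    rw [hM]
    exact Finset.prod_ne_zero_iff.mpr fun i _ => pow_ne_zero _ (hp_prime i).ne_zero
  have hpij : ∀ i j : Fin K, i ≠ j → ¬ p i ∣ p j := by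
    intro i j hne hdvd
    exact hne (hpdist (Polynomial.eq_of_monic_of_associated (hpmonic i) (hpmonic j)
      ((hpirr i).associated_of_dvd (hpirr j) hdvd)))
  -- the special codewords
  set b : Fin K → Polynomial F := fun i => ∏ k ∈ Finset.univ.erase i, p k ^ t k with hb
  set a : Fin K → Polynomial F := fun i => p i ^ (t i - 1) * b i with ha
  have hMi : ∀ i, M = p i ^ t i * b i := by
    intro i
    rw [hM, ← Finset.mul_prod_erase _ _ (Finset.mem_univ i)]
  have hpb : ∀ i, ¬ p i ∣ b i := by
    intro i h
    obtain ⟨k, hk, hdvd⟩ := ((hp_prime i).dvd_finset_prod_iff _).mp h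
    have hik : p i ∣ p k := (hp_prime i).dvd_of_dvd_pow hdvd
    exact hpij i k (fun he => (Finset.mem_erase.mp hk).1 he.symm) hik
  have hb0 : ∀ i, b i ≠ 0 := fun i =>
    Finset.prod_ne_zero_iff.mpr fun k _ => pow_ne_zero _ (hp_prime k).ne_zero
  have ha0 : ∀ i, a i ≠ 0 := fun i =>
    mul_ne_zero (pow_ne_zero _ (hp_prime i).ne_zero) (hb0 i)
  have hMa : ∀ i, M = p i * a i := by
    intro i
    rw [hMi i, ha]
    have := ht i
    simp only [← mul_assoc, ← pow_succ']
    rw [show t i - 1 + 1 = t i by omega]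
  -- key characterization
  have hkey : ∀ i j, (¬ m j ∣ a i ↔ p i ^ t i ∣ m j) := by
    intro i j
    constructor
    · intro h
      by_contra hnd
      exact h (key_dvd (hp_prime i) (hpb i) (hmonic j).ne_zero
        ((hMi i) ▸ Finset.dvd_lcm (Finset.mem_univ j)) hnd)
    · intro hpt hma
      have h1 : p i ^ t i ∣ p i ^ (t i - 1) * b i := dvd_trans hpt hma
      have h2 : p i ^ t i ∣ p i ^ (t i - 1) :=
        (hp_prime i).pow_dvd_of_dvd_mul_right (t i) (hpb i) h1
      have h3 : p i ^ (t i - 1) * p i ∣ p i ^ (t i - 1) * 1 := by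
        rw [mul_one, ← pow_succ, show t i - 1 + 1 = t i by have := ht i; omega]; exact h2
      have h4 : p i ∣ 1 :=
        (mul_dvd_mul_iff_left (pow_ne_zero _ (hp_prime i).ne_zero)).mp h3
      exact (hp_prime i).not_unit (isUnit_of_dvd_one h4)
  have hdeglt : ∀ i, (a i).degree < M.degree := by
    intro i
    apply Polynomial.degree_lt_degree
    rw [hMa i, Polynomial.natDegree_mul (hp_prime i).ne_zero (ha0 i)]
    have := Polynomial.natDegree_pos_iff_degree_pos.mpr
      (Polynomial.degree_pos_of_irreducible (hpirr i))
    omega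
  -- membership of each d_i in the codeDist set
  have hmem : ∀ i, (Finset.univ.filter fun j : Fin L => p i ^ t i ∣ m j).card ∈
      {k | ∃ c : Polynomial F, c ≠ 0 ∧ c.degree < (Finset.univ.lcm m).degree ∧
        (Finset.univ.filter fun j => ¬ m j ∣ c).card = k} := by
    intro i
    refine ⟨a i, ha0 i, hdeglt i, ?_⟩
    congr 1
    exact Finset.filter_congr fun j _ => hkey i j
  have hSne : {k | ∃ c : Polynomial F, c ≠ 0 ∧ c.degree < (Finset.univ.lcm m).degree ∧
      (Finset.univ.filter fun j => ¬ m j ∣ c).card = k}.Nonempty :=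
    ⟨_, hmem ⟨0, hK⟩⟩
  have : Nonempty (Fin K) := ⟨⟨0, hK⟩⟩
  apply le_antisymm
  · -- codeDist ≤ min d_i
    apply le_csInf (Set.range_nonempty _)
    rintro k ⟨i, rfl⟩
    exact Nat.sInf_le (hmem i)
  · -- min d_i ≤ codeDist
    apply le_csInf hSne
    rintro k ⟨c, hc0, hcdeg, rfl⟩
    -- M does not divide c
    have hMc : ¬ M ∣ c := fun h =>
      absurd hcdeg (not_lt.mpr (Polynomial.degree_le_of_dvd h hc0))
    -- some p i ^ t i does not divide c
    have : ∃ i, ¬ p i ^ t i ∣ c := by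
      by_contra h
      push_neg at h
      apply hMc
      rw [hM]
      refine Finset.prod_dvd_of_coprime ?_ fun i _ => h i
      intro i _ j _ hne
      exact (((hp_prime i).irreducible.isCoprime_or_dvd (p j)).resolve_right
        (hpij i j hne)).pow
    obtain ⟨i, hi⟩ := this
    have hsub : (Finset.univ.filter fun j : Fin L => p i ^ t i ∣ m j) ⊆
        (Finset.univ.filter fun j => ¬ m j ∣ c) := by
      intro j hj
      rw [Finset.mem_filter] at hj ⊢
      exact ⟨hj.1, fun hmc => hi (dvd_trans hj.2 hmc)⟩
    calc sInf (Set.range fun i : Fin K =>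
          (Finset.univ.filter fun j : Fin L => p i ^ t i ∣ m j).card)
        ≤ (Finset.univ.filter fun j : Fin L => p i ^ t i ∣ m j).card :=
          csInf_le (OrderBot.bddBelow _) ⟨i, rfl⟩
      _ ≤ _ := Finset.card_le_card hsub
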